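/- Let s be a prime power, n ≥ 2, let h₁ and h₂ be linearly independent nonzero linear forms in x₂,...,xₙ (so n ≥ 3), and let a₁, a₂ ∈ F_s, and G ⊆ F_s with |G| = k ≥ 1. On the restricted domain Ω = {x ∈ F_sⁿ : x₁ ∈ G}, the two columns f(x) = a₁x₁ + h₁(x₂,...,xₙ) and g(x) = a₂x₁ + h₂(x₂,...,xₙ) are orthogonal: every pair (u,v) ∈ F_s² occurs exactly k·s^{n−3} times as (f(x), g(x)) for x ∈ Ω. -/

import Mathlib

/-- Lemma 13(i): on the restricted domain `Ω = G × F^{n−1}`, the columns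
`a₁x₁ + h₁` and `a₂x₁ + h₂` with `h₁, h₂` independent linear forms are
orthogonal: every value pair occurs exactly `k·s^{n−3}` times. -/
theorem branching_columns_orthogonal
    {F : Type*} [Field F] [Fintype F] {n : ℕ} (hn : 3 ≤ n)
    (G : Set F) (k : ℕ) (hk : 1 ≤ k) (hG : Nat.card G = k)
    (h₁ h₂ : (Fin (n - 1) → F) →ₗ[F] F)
    (hind : ∀ t : F, h₁ ≠ t • h₂ ∧ h₂ ≠ t • h₁)
    (a₁ a₂ : F) :
    ∀ u v : F,
      Nat.card {x : F × (Fin (n - 1) → F) //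
          x.1 ∈ G ∧ a₁ * x.1 + h₁ x.2 = u ∧ a₂ * x.1 + h₂ x.2 = v}
        = k * Fintype.card F ^ (n - 3) := by
  classical
  intro u v
  set L : (Fin (n - 1) → F) →ₗ[F] F × F := h₁.prod h₂ with hL
  -- surjectivity of the combined map
  have hsurj : Function.Surjective L := by
    have h1ne : h₁ ≠ 0 := by simpa using (hind 0).1
    obtain ⟨y, hy⟩ : ∃ y, h₁ y ≠ 0 := by
      by_contra h; push_neg at h
      exact h1ne (LinearMap.ext fun y => by simp [h y])
    set y₀ : Fin (n - 1) → F := (h₁ y)⁻¹ • y with hy₀def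
    have hy₀1 : h₁ y₀ = 1 := by
      simp [hy₀def, inv_mul_cancel₀ hy]
    have h2ne := (hind (h₂ y₀)).2
    obtain ⟨z, hz⟩ : ∃ z, h₂ z ≠ h₂ y₀ * h₁ z := by
      by_contra h; push_neg at h
      exact h2ne (LinearMap.ext fun z => by simp [h z, smul_eq_mul])
    set z' : Fin (n - 1) → F := z - (h₁ z) • y₀ with hz'def
    have hz1 : h₁ z' = 0 := by
      simp [hz'def, hy₀1, smul_eq_mul]
    have hz2 : h₂ z' ≠ 0 := by
      simp only [hz'def, map_sub, map_smul, smul_eq_mul, sub_ne_zero]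
      intro h; exact hz (by rw [h]; ring)
    rintro ⟨p, q⟩
    refine ⟨p • y₀ + ((q - p * h₂ y₀) * (h₂ z')⁻¹) • z', ?_⟩
    have e1 : h₁ (p • y₀ + ((q - p * h₂ y₀) * (h₂ z')⁻¹) • z') = p := by
      simp [map_add, map_smul, hy₀1, hz1, smul_eq_mul]
    have e2 : h₂ (p • y₀ + ((q - p * h₂ y₀) * (h₂ z')⁻¹) • z') = q := by
      simp only [map_add, map_smul, smul_eq_mul]
      field_simp
      ring
    simp [hL, LinearMap.prod_apply, e1, e2, Prod.ext_iff]
  -- cardinality of the kernel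
  have hrange : LinearMap.range L = ⊤ := LinearMap.range_eq_top.mpr hsurj
  have hrank : Module.finrank F (LinearMap.ker L) = n - 3 := by
    have := LinearMap.finrank_range_add_finrank_ker L
    rw [hrange, finrank_top] at this
    have hdom : Module.finrank F (Fin (n - 1) → F) = n - 1 := by
      simp [Module.finrank_pi]
    have hcod : Module.finrank F (F × F) = 2 := by
      simp [Module.finrank_prod]
    rw [hdom, hcod] at this
    omega
  have hker : Nat.card (LinearMap.ker L) = Fintype.card F ^ (n - 3) := by
    rw [Nat.card_eq_fintype_card, Module.card_eq_pow_finrank (K := F), hrank]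
  -- choose a solution for each value pair
  choose sol hsol using hsurj
  -- the equivalence
  have hGfin : Finite G := Set.toFinite G
  let e : {x : F × (Fin (n - 1) → F) //
      x.1 ∈ G ∧ a₁ * x.1 + h₁ x.2 = u ∧ a₂ * x.1 + h₂ x.2 = v}
      ≃ G × LinearMap.ker L :=
    { toFun := fun x => (⟨x.1.1, x.2.1⟩,
        ⟨x.1.2 - sol (u - a₁ * x.1.1, v - a₂ * x.1.1), by
          have hx1 : h₁ x.1.2 = u - a₁ * x.1.1 := by linear_combination x.2.2.1
          have hx2 : h₂ x.1.2 = v - a₂ * x.1.1 := by linear_combination x.2.2.2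
          rw [LinearMap.mem_ker, map_sub, hsol, sub_eq_zero, hL,
            LinearMap.prod_apply, Function.prod, hx1, hx2]⟩),
      invFun := fun gz => ⟨(gz.1.1, gz.2.1 + sol (u - a₁ * gz.1.1, v - a₂ * gz.1.1)), by
          have hz := gz.2.2
          rw [LinearMap.mem_ker] at hz
          have key : L (gz.2.1 + sol (u - a₁ * gz.1.1, v - a₂ * gz.1.1))
              = (u - a₁ * gz.1.1, v - a₂ * gz.1.1) := by
            rw [map_add, hz, hsol, zero_add]
          simp only [hL, LinearMap.prod_apply, Function.prod, Prod.mk.injEq] at key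
          exact ⟨gz.1.2, by linear_combination key.1, by linear_combination key.2⟩⟩,
      left_inv := fun x => by
        apply Subtype.ext
        apply Prod.ext <;> simp,
      right_inv := fun gz => by
        apply Prod.ext
        · rfl
        · apply Subtype.ext; simp }
  rw [Nat.card_congr e, Nat.card_prod, hG, hker]
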